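/- Let u ∈ C¹((0,T); L¹(ℝ, e^{|x|}dx)) be compactly supported in x, uniformly in t, and satisfy (1+ξ²)û_t(ξ,t) = -iξ(û(ξ,t) + λ û(ξ,t)²) for all real ξ and t ∈ (0,T), where λ ≠ 0. Then for each t, either û(i,t) = 0 or û(i,t) = -1/λ, where û(i,t) = ∫_ℝ u(x,t)eˣ dx. -/

import Mathlib

open Real MeasureTheory Complex Filter Set Topology

private noncomputable def cc : ℂ → ℂ := fun z => -Complex.I * z / (1 + z ^ 2)

private lemma one_add_sq_ne {z : ℂ} (h1 : z ≠ Complex.I) (h2 : z ≠ -Complex.I) :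
    1 + z ^ 2 ≠ 0 := by
  intro h0
  have hfac : (z - Complex.I) * (z + Complex.I) = 0 := by
    have : Complex.I ^ 2 = -1 := Complex.I_sq
    linear_combination h0 - this
  rcases mul_eq_zero.1 hfac with h | h
  · exact h1 (sub_eq_zero.1 h)
  · exact h2 (eq_neg_of_add_eq_zero_left h)

private lemma cc_real_mul_I {s : ℝ} (h : (1:ℝ) - s^2 ≠ 0) :
    cc ((s:ℂ) * Complex.I) = ((s / (1 - s^2) : ℝ) : ℂ) := by
  have hI : Complex.I ^ 2 = -1 := Complex.I_sq
  have h1 : -Complex.I * ((s:ℂ) * Complex.I) = (s:ℂ) := by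
    linear_combination (-(s:ℂ)) * hI
  have h2 : 1 + ((s:ℂ) * Complex.I) ^ 2 = ((1 - s^2 : ℝ) : ℂ) := by
    push_cast
    linear_combination ((s:ℂ)^2) * hI
  simp only [cc, h1, h2, ← Complex.ofReal_div]

private lemma countable_of_no_accPt {S : Set ℝ} (h : ∀ x : ℝ, ¬ AccPt x (Filter.principal S)) :
    S.Countable := by
  have hfin : ∀ n : ℤ, (S ∩ Set.Icc (n:ℝ) (n+1)).Finite := by
    intro n
    by_contra hf
    have hinf : (S ∩ Set.Icc (n:ℝ) (n+1)).Infinite := hf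
    obtain ⟨x, -, hx⟩ := hinf.exists_accPt_of_subset_isCompact isCompact_Icc
      Set.inter_subset_right
    exact h x (hx.mono (principal_mono.2 Set.inter_subset_left))
  have hsub : S ⊆ ⋃ n : ℤ, (S ∩ Set.Icc (n:ℝ) (n+1)) := by
    intro x hx
    refine Set.mem_iUnion.2 ⟨⌊x⌋, hx, Int.floor_le x, ?_⟩
    push_cast
    linarith [Int.lt_floor_add_one x]
  exact (Set.countable_iUnion fun n => (hfin n).countable).mono hsub

private lemma ofReal_tendsto_punctured (x : ℝ) :
    Filter.Tendsto (fun y : ℝ => (y:ℂ)) (𝓝[≠] x) (𝓝[≠] (x:ℂ)) := by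
  rw [tendsto_nhdsWithin_iff]
  constructor
  · exact (Complex.continuous_ofReal.tendsto x).mono_left nhdsWithin_le_nhds
  · filter_upwards [self_mem_nhdsWithin] with y hy
    simp only [Set.mem_compl_iff, Set.mem_singleton_iff] at hy ⊢
    exact fun hxy => hy (Complex.ofReal_injective hxy)

private lemma cexp_real_tendsto_atBot_zero :
    Filter.Tendsto (fun x : ℝ => Complex.exp (x:ℂ)) atBot (𝓝 0) := by
  rw [tendsto_zero_iff_norm_tendsto_zero]
  have : ∀ x : ℝ, ‖Complex.exp (x:ℂ)‖ = Real.exp x := by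
    intro x
    rw [Complex.norm_exp, Complex.ofReal_re]
  simp only [this]
  exact Real.tendsto_exp_atBot

private theorem key (T lam : ℝ) (hT : 0 < T) (hlam : lam ≠ 0)
    (Φ : ℝ → ℂ → ℂ)
    (hent : ∀ t ∈ Set.Ioo 0 T, Differentiable ℂ (Φ t))
    (hode : ∀ (ξ : ℝ), ∀ t ∈ Set.Ioo 0 T,
      (1 + (ξ:ℂ)^2) * deriv (fun s => Φ s ξ) t
        = -Complex.I * ξ * (Φ t ξ + lam * Φ t ξ ^ 2)) :
    ∀ t ∈ Set.Ioo 0 T, Φ t Complex.I = 0 ∨ Φ t Complex.I = -1/(lam:ℂ) := by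
  intro t₀ ht₀
  by_contra hcon
  push_neg at hcon
  obtain ⟨ha0, ha1⟩ := hcon
  set a : ℂ := Φ t₀ Complex.I with ha
  have hlamC : (lam:ℂ) ≠ 0 := by exact_mod_cast hlam
  have h1a : 1 + (lam:ℂ) * a ≠ 0 := by
    intro h
    apply ha1
    rw [eq_div_iff hlamC]
    linear_combination h
  have hPa : a + (lam:ℂ) * a^2 ≠ 0 := by
    intro h
    have hfac : a * (1 + (lam:ℂ) * a) = 0 := by linear_combination h
    rcases mul_eq_zero.1 hfac with h' | h'
    exacts [ha0 h', h1a h']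
  -- Step 1 : where the nonlinearity is nonzero, we really have a derivative
  have hderiv : ∀ (ξ : ℝ), ξ ≠ 0 → ∀ t ∈ Set.Ioo 0 T, Φ t ξ + lam * Φ t ξ ^ 2 ≠ 0 →
      HasDerivAt (fun s => Φ s ξ) (cc ξ * (Φ t ξ + lam * Φ t ξ ^ 2)) t := by
    intro ξ hξ t ht hP
    have hcast : (1 : ℂ) + (ξ:ℂ)^2 = ((1 + ξ^2 : ℝ) : ℂ) := by push_cast; ring
    have h1 : (1 : ℂ) + (ξ:ℂ)^2 ≠ 0 := by
      rw [hcast]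
      exact_mod_cast (by positivity : (1 + ξ^2 : ℝ) ≠ 0)
    have hI : -Complex.I * (ξ:ℂ) ≠ 0 :=
      mul_ne_zero (neg_ne_zero.2 Complex.I_ne_zero) (by exact_mod_cast hξ)
    have hd : DifferentiableAt ℝ (fun s => Φ s ξ) t := by
      by_contra hnd
      have h0 := hode ξ t ht
      rw [deriv_zero_of_not_differentiableAt hnd, mul_zero] at h0
      rcases mul_eq_zero.1 h0.symm with h' | h'
      · exact hI h'
      · exact hP h'
    have hval : deriv (fun s => Φ s ξ) t = cc ξ * (Φ t ξ + lam * Φ t ξ ^ 2) := by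
      have heq := hode ξ t ht
      rw [show cc (ξ:ℂ) = -Complex.I * (ξ:ℂ) / (1 + (ξ:ℂ)^2) from rfl]
      field_simp
      linear_combination heq
    have hh := hd.hasDerivAt
    rwa [hval] at hh
  -- Step 2 : the zero set of the nonlinearity at time t₀ is countable
  set P : ℂ → ℂ := fun z => Φ t₀ z + lam * Φ t₀ z ^ 2 with hPdef
  have hPdiff : Differentiable ℂ P := by
    have h := hent t₀ ht₀
    exact h.add ((h.pow 2).const_mul _)
  have hPanal : AnalyticOnNhd ℂ P Set.univ := analyticOnNhd_univ_iff_differentiable.2 hPdiff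
  have hZc : {ξ : ℝ | P ξ = 0}.Countable := by
    apply countable_of_no_accPt
    intro x hacc
    have h1 : ∃ᶠ y : ℝ in 𝓝[≠] x, P (y:ℂ) = 0 := by
      rw [frequently_nhdsWithin_iff]
      exact (accPt_iff_frequently.1 hacc).mono (fun y hy => ⟨hy.2, hy.1⟩)
    have hfreq : ∃ᶠ y in 𝓝[≠] (x:ℂ), P y = 0 := (ofReal_tendsto_punctured x).frequently h1
    have hzero := hPanal.eqOn_zero_of_preconnected_of_frequently_eq_zero
      isPreconnected_univ (Set.mem_univ (x:ℂ)) hfreq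
    exact hPa (hzero (Set.mem_univ Complex.I))
  -- time steps
  set D : ℕ → ℝ := fun n => (T - t₀) / (n + 2) with hD
  have hTt₀ : 0 < T - t₀ := by linarith [ht₀.2]
  have hD0 : ∀ n : ℕ, 0 < D n := by
    intro n
    apply div_pos hTt₀
    positivity
  have hDmem : ∀ n : ℕ, t₀ + D n ∈ Set.Ioo 0 T := by
    intro n
    constructor
    · linarith [ht₀.1, hD0 n]
    · have h2 : D n ≤ (T - t₀) / 2 := by
        apply div_le_div_of_nonneg_left hTt₀.le (by norm_num)
        have := Nat.cast_nonneg (α := ℝ) n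
        push_cast
        linarith
      linarith
  -- Step 3 : local solution of the Riccati equation
  have claim : ∀ ξ : ℝ, ξ ≠ 0 → P ξ ≠ 0 → ∃ n : ℕ,
      Complex.exp (-(cc ξ * ((D n : ℝ) : ℂ))) * (Φ (t₀ + D n) ξ * (1 + lam * Φ t₀ ξ))
        = Φ t₀ ξ * (1 + lam * Φ (t₀ + D n) ξ) := by
    intro ξ hξ hPξ
    have hPξ' : Φ t₀ ξ + (lam:ℂ) * Φ t₀ ξ ^ 2 ≠ 0 := hPξ
    have hdf : DifferentiableAt ℝ (fun s => Φ s ξ) t₀ :=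
      (hderiv ξ hξ t₀ ht₀ hPξ').differentiableAt
    have hgc : ContinuousAt (fun s => Φ s ξ + (lam:ℂ) * Φ s ξ ^ 2) t₀ := by
      have h1 := hdf.continuousAt
      exact h1.add (continuousAt_const.mul (h1.pow 2))
    have hne : ∀ᶠ s in 𝓝 t₀, Φ s ξ + (lam:ℂ) * Φ s ξ ^ 2 ≠ 0 := hgc.eventually_ne hPξ'
    obtain ⟨δ, hδ0, hδ⟩ := Metric.eventually_nhds_iff.1 hne
    obtain ⟨n, hn⟩ : ∃ n : ℕ, D n < δ := by
      obtain ⟨n, hn⟩ := exists_nat_gt ((T - t₀) / δ)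
      refine ⟨n, ?_⟩
      rw [hD]
      simp only
      rw [div_lt_iff₀ (by positivity : (0:ℝ) < (n:ℝ) + 2)]
      have h2 := (div_lt_iff₀ hδ0).1 hn
      nlinarith [hδ0.le, Nat.cast_nonneg (α := ℝ) n]
    refine ⟨n, ?_⟩
    set t₁ : ℝ := t₀ + D n with ht₁def
    have hDn0 := hD0 n
    have hsub : Set.Icc t₀ t₁ ⊆ Set.Ioo 0 T := by
      intro s hs
      have hm := (hDmem n).2
      exact ⟨by linarith [ht₀.1, hs.1], by linarith [hs.2]⟩
    have hgne : ∀ s ∈ Set.Icc t₀ t₁, Φ s ξ + (lam:ℂ) * Φ s ξ ^ 2 ≠ 0 := by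
      intro s hs
      apply hδ
      have habs : |s - t₀| ≤ D n := by
        rw [abs_le]
        exact ⟨by linarith [hs.1], by linarith [hs.2]⟩
      calc dist s t₀ = |s - t₀| := Real.dist_eq s t₀
        _ ≤ D n := habs
        _ < δ := hn
    have hden : ∀ s ∈ Set.Icc t₀ t₁, (1:ℂ) + lam * Φ s ξ ≠ 0 := by
      intro s hs h0
      apply hgne s hs
      linear_combination (Φ s ξ) * h0
    set h : ℝ → ℂ :=
      fun s => Complex.exp (-(cc ξ * ((s:ℂ) - (t₀:ℂ)))) * (Φ s ξ / (1 + lam * Φ s ξ)) with hh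
    have hders : ∀ s ∈ Set.Icc t₀ t₁, HasDerivAt h 0 s := by
      intro s hs
      have hsI : s ∈ Set.Ioo 0 T := hsub hs
      have hgs := hgne s hs
      have hfd : HasDerivAt (fun r => Φ r ξ) (cc ξ * (Φ s ξ + lam * Φ s ξ ^ 2)) s :=
        hderiv ξ hξ s hsI hgs
      have hd1 : HasDerivAt (fun r => (1:ℂ) + (lam:ℂ) * Φ r ξ)
          ((lam:ℂ) * (cc ξ * (Φ s ξ + lam * Φ s ξ ^ 2))) s :=
        (hfd.const_mul (lam:ℂ)).const_add 1
      have hq := hfd.fun_div hd1 (hden s hs)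
      have hre : HasDerivAt (fun r : ℝ => (r:ℂ)) 1 s := by
        simpa using (hasDerivAt_id s).ofReal_comp
      have hlin : HasDerivAt (fun r : ℝ => -(cc ξ * ((r:ℂ) - (t₀:ℂ)))) (-(cc ξ)) s := by
        have h3 := ((hre.sub_const (t₀:ℂ)).const_mul (cc ξ)).neg
        simpa [Pi.neg_def] using h3
      have hE := hlin.cexp
      have hprod := hE.fun_mul hq
      rw [hh]
      refine hprod.congr_deriv ?_
      have hd0 : (1:ℂ) + lam * Φ s ξ ≠ 0 := hden s hs
      field_simp
      ring
    have hconst := constant_of_has_deriv_right_zero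
      (fun s hs => ((hders s hs).continuousAt.continuousWithinAt))
      (fun s hs => ((hders s (Set.Ico_subset_Icc_self hs)).hasDerivWithinAt))
    have hmem₁ : t₁ ∈ Set.Icc t₀ t₁ := Set.right_mem_Icc.2 (by linarith)
    have hmem₀ : t₀ ∈ Set.Icc t₀ t₁ := Set.left_mem_Icc.2 (by linarith)
    have hkey := hconst t₁ hmem₁
    rw [hh] at hkey
    simp only at hkey
    have e₁ : ((t₁:ℝ):ℂ) - (t₀:ℂ) = ((D n : ℝ):ℂ) := by
      rw [ht₁def]; push_cast; ring
    rw [e₁, sub_self, mul_zero, neg_zero, Complex.exp_zero, one_mul] at hkey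
    have hden₀ := hden t₀ hmem₀
    have hden₁ := hden t₁ hmem₁
    rw [← mul_div_assoc, div_eq_div_iff hden₁ hden₀] at hkey
    linear_combination hkey
  -- Step 4 : pigeonhole
  have hbig : ∃ N : ℕ, ¬ ({ξ : ℝ | ξ ≠ 0 ∧ P ξ ≠ 0 ∧
      Complex.exp (-(cc ξ * ((D N : ℝ) : ℂ))) * (Φ (t₀ + D N) ξ * (1 + lam * Φ t₀ ξ))
        = Φ t₀ ξ * (1 + lam * Φ (t₀ + D N) ξ)}).Countable := by
    by_contra hall
    push_neg at hall
    have hcover : (Set.univ : Set ℝ) ⊆ ({(0:ℝ)} ∪ {ξ : ℝ | P ξ = 0}) ∪ ⋃ n : ℕ,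
        {ξ : ℝ | ξ ≠ 0 ∧ P ξ ≠ 0 ∧
          Complex.exp (-(cc ξ * ((D n : ℝ) : ℂ))) * (Φ (t₀ + D n) ξ * (1 + lam * Φ t₀ ξ))
            = Φ t₀ ξ * (1 + lam * Φ (t₀ + D n) ξ)} := by
      intro ξ _
      by_cases h0 : ξ = 0
      · exact Or.inl (Or.inl h0)
      by_cases hP : P ξ = 0
      · exact Or.inl (Or.inr hP)
      obtain ⟨n, hn⟩ := claim ξ h0 hP
      exact Or.inr (Set.mem_iUnion.2 ⟨n, h0, hP, hn⟩)
    have : (Set.univ : Set ℝ).Countable :=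
      Set.Countable.mono hcover
        (((Set.countable_singleton 0).union hZc).union (Set.countable_iUnion hall))
    exact Cardinal.not_countable_real this
  obtain ⟨N, hN⟩ := hbig
  -- Step 5 : identity theorem and contradiction at ξ = i
  set t₁ : ℝ := t₀ + D N with ht₁def
  have ht₁ : t₁ ∈ Set.Ioo 0 T := hDmem N
  set Δ : ℝ := D N with hΔdef
  have hΔ0 : 0 < Δ := hD0 N
  set b : ℂ := Φ t₁ Complex.I with hb
  set U : Set ℂ := {Complex.I, -Complex.I}ᶜ with hU
  have hUopen : IsOpen U := by
    rw [hU, isOpen_compl_iff]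
    exact ((Set.finite_singleton (-Complex.I)).insert Complex.I).isClosed
  have hUconn : IsPreconnected U := by
    have hcnt : ({Complex.I, -Complex.I} : Set ℂ).Countable :=
      (Set.countable_singleton (-Complex.I)).insert Complex.I
    have h2 : (1:Cardinal) < Module.rank ℝ ℂ := by
      rw [rank_real_complex]; norm_num
    rw [hU]
    exact (hcnt.isConnected_compl_of_one_lt_rank h2).isPreconnected
  have hmemU : ∀ s : ℝ, (s:ℂ) ∈ U := by
    intro s
    simp only [hU, Set.mem_compl_iff, Set.mem_insert_iff, Set.mem_singleton_iff]
    push_neg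
    constructor
    · intro hcon; simpa using congrArg Complex.im hcon
    · intro hcon; simpa using congrArg Complex.im hcon
  have hmemU' : ∀ s : ℝ, s ≠ 1 → s ≠ -1 → ((s:ℂ) * Complex.I) ∈ U := by
    intro s h1 h2
    simp only [hU, Set.mem_compl_iff, Set.mem_insert_iff, Set.mem_singleton_iff]
    push_neg
    constructor
    · intro hc; apply h1
      have h3 := congrArg Complex.im hc
      simpa using h3
    · intro hc; apply h2
      have h3 := congrArg Complex.im hc
      simpa using h3
  have hUne : ∀ z ∈ U, 1 + z^2 ≠ 0 := by
    intro z hz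
    simp only [hU, Set.mem_compl_iff, Set.mem_insert_iff, Set.mem_singleton_iff] at hz
    push_neg at hz
    exact one_add_sq_ne hz.1 hz.2
  set G₁ : ℂ → ℂ := fun z =>
    Complex.exp (-(cc z * ((Δ:ℝ):ℂ))) * (Φ t₁ z * (1 + lam * Φ t₀ z)) with hG₁
  set G₂ : ℂ → ℂ := fun z => Φ t₀ z * (1 + lam * Φ t₁ z) with hG₂
  have hccdiff : ∀ z ∈ U, DifferentiableAt ℂ cc z := by
    intro z hz
    have hdz : DifferentiableAt ℂ (fun z : ℂ => -Complex.I * z / (1 + z ^ 2)) z :=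
      (differentiableAt_id.const_mul (-Complex.I)).div
        ((differentiableAt_pow 2).const_add 1) (hUne z hz)
    exact hdz
  have hG₁anal : AnalyticOnNhd ℂ G₁ U := by
    apply DifferentiableOn.analyticOnNhd ?_ hUopen
    intro z hz
    apply DifferentiableAt.differentiableWithinAt
    apply DifferentiableAt.mul
    · exact (((hccdiff z hz).mul_const _).neg).cexp
    · exact ((hent t₁ ht₁ z).mul (((hent t₀ ht₀ z).const_mul _).const_add 1))
  have hG₂anal : AnalyticOnNhd ℂ G₂ U := by
    apply DifferentiableOn.analyticOnNhd ?_ hUopen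
    intro z hz
    exact ((hent t₀ ht₀ z).mul
      (((hent t₁ ht₁ z).const_mul _).const_add 1)).differentiableWithinAt
  obtain ⟨x₀, hx₀⟩ : ∃ x : ℝ, AccPt x (Filter.principal {ξ : ℝ | ξ ≠ 0 ∧ P ξ ≠ 0 ∧
      Complex.exp (-(cc ξ * ((Δ:ℝ) : ℂ))) * (Φ t₁ ξ * (1 + lam * Φ t₀ ξ))
        = Φ t₀ ξ * (1 + lam * Φ t₁ ξ)}) := by
    by_contra hno
    push_neg at hno
    exact hN (countable_of_no_accPt hno)
  have hfreq : ∃ᶠ z in 𝓝[≠] ((x₀:ℝ):ℂ), G₁ z = G₂ z := by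
    have h1 : ∃ᶠ y : ℝ in 𝓝[≠] x₀, G₁ (y:ℂ) = G₂ (y:ℂ) := by
      rw [frequently_nhdsWithin_iff]
      refine (accPt_iff_frequently.1 hx₀).mono ?_
      rintro y ⟨hyne, hymem⟩
      exact ⟨hymem.2.2, hyne⟩
    exact (ofReal_tendsto_punctured x₀).frequently h1
  have hEq : Set.EqOn G₁ G₂ U :=
    hG₁anal.eqOn_of_preconnected_of_frequently_eq hG₂anal hUconn (hmemU x₀) hfreq
  -- limits along s*I as s → 1 from below and above
  have hΦt₀c : Continuous (Φ t₀) := (hent t₀ ht₀).continuous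
  have hΦt₁c : Continuous (Φ t₁) := (hent t₁ ht₁).continuous
  have hζ : Tendsto (fun s : ℝ => (s:ℂ) * Complex.I) (𝓝 1) (𝓝 Complex.I) := by
    have h1 : Continuous (fun s : ℝ => (s:ℂ) * Complex.I) :=
      Complex.continuous_ofReal.mul continuous_const
    have h2 := h1.tendsto (1:ℝ)
    simpa using h2
  haveI hne₁ : (𝓝[Set.Ioo (0:ℝ) 1] 1).NeBot :=
    right_nhdsWithin_Ioo_neBot (by norm_num)
  haveI hne₂ : (𝓝[Set.Ioo (1:ℝ) 2] 1).NeBot :=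
    left_nhdsWithin_Ioo_neBot (by norm_num)
  have hid₁ : Tendsto (fun s : ℝ => s) (𝓝[Set.Ioo (0:ℝ) 1] 1) (𝓝 1) :=
    (continuous_id.tendsto 1).mono_left nhdsWithin_le_nhds
  have hid₂ : Tendsto (fun s : ℝ => s) (𝓝[Set.Ioo (1:ℝ) 2] 1) (𝓝 1) :=
    (continuous_id.tendsto 1).mono_left nhdsWithin_le_nhds
  have hr₁ : Tendsto (fun s : ℝ => s / (1 - s^2) * Δ) (𝓝[Set.Ioo (0:ℝ) 1] 1) atTop := by
    apply Tendsto.atTop_mul_const hΔ0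
    have hden : Tendsto (fun s : ℝ => 1 - s^2) (𝓝[Set.Ioo (0:ℝ) 1] 1) (𝓝[>] 0) := by
      rw [tendsto_nhdsWithin_iff]
      constructor
      · have hc0 : Continuous (fun s : ℝ => 1 - s^2) :=
          continuous_const.sub (continuous_pow 2)
        have hc := hc0.tendsto (1:ℝ)
        have hc' : Tendsto (fun s : ℝ => 1 - s^2) (𝓝 1) (𝓝 0) := by
          simpa using hc
        exact hc'.mono_left nhdsWithin_le_nhds
      · filter_upwards [self_mem_nhdsWithin] with s hs
        rcases hs with ⟨hs0, hs1⟩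
        simp only [Set.mem_Ioi]
        nlinarith
    have hinv : Tendsto (fun s : ℝ => (1 - s^2)⁻¹) (𝓝[Set.Ioo (0:ℝ) 1] 1) atTop :=
      tendsto_inv_nhdsGT_zero.comp hden
    have hmul := Filter.Tendsto.pos_mul_atTop one_pos hid₁ hinv
    simpa [div_eq_mul_inv] using hmul
  have hr₂ : Tendsto (fun s : ℝ => s / (1 - s^2) * Δ) (𝓝[Set.Ioo (1:ℝ) 2] 1) atBot := by
    apply Tendsto.atBot_mul_const hΔ0
    have hfun : (fun s : ℝ => s / (1 - s^2)) = (fun s : ℝ => -(s * (s^2 - 1)⁻¹)) := by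
      funext s
      rw [div_eq_mul_inv, show (1:ℝ) - s^2 = -(s^2 - 1) by ring, inv_neg, mul_neg]
    rw [hfun]
    have hden : Tendsto (fun s : ℝ => s^2 - 1) (𝓝[Set.Ioo (1:ℝ) 2] 1) (𝓝[>] 0) := by
      rw [tendsto_nhdsWithin_iff]
      constructor
      · have hc0 : Continuous (fun s : ℝ => s^2 - 1) :=
          (continuous_pow 2).sub continuous_const
        have hc := hc0.tendsto (1:ℝ)
        have hc' : Tendsto (fun s : ℝ => s^2 - 1) (𝓝 1) (𝓝 0) := by
          simpa using hc
        exact hc'.mono_left nhdsWithin_le_nhds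
      · filter_upwards [self_mem_nhdsWithin] with s hs
        rcases hs with ⟨hs1, hs2⟩
        simp only [Set.mem_Ioi]
        nlinarith
    have hinv : Tendsto (fun s : ℝ => (s^2 - 1)⁻¹) (𝓝[Set.Ioo (1:ℝ) 2] 1) atTop :=
      tendsto_inv_nhdsGT_zero.comp hden
    have hmul := Filter.Tendsto.pos_mul_atTop one_pos hid₂ hinv
    exact tendsto_neg_atTop_atBot.comp hmul
  have hexp₁ : Tendsto (fun s : ℝ => Complex.exp (-(cc ((s:ℂ) * Complex.I) * ((Δ:ℝ):ℂ))))
      (𝓝[Set.Ioo (0:ℝ) 1] 1) (𝓝 0) := by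
    have hcomp : Tendsto (fun s : ℝ => Complex.exp (((-(s / (1 - s^2) * Δ) : ℝ) : ℂ)))
        (𝓝[Set.Ioo (0:ℝ) 1] 1) (𝓝 0) :=
      cexp_real_tendsto_atBot_zero.comp (tendsto_neg_atTop_atBot.comp hr₁)
    apply hcomp.congr'
    filter_upwards [self_mem_nhdsWithin] with s hs
    rcases hs with ⟨hs0, hs1⟩
    have hsne : (1:ℝ) - s^2 ≠ 0 := by nlinarith
    rw [cc_real_mul_I hsne]
    push_cast
    ring_nf
  have hexp₂ : Tendsto (fun s : ℝ => Complex.exp (cc ((s:ℂ) * Complex.I) * ((Δ:ℝ):ℂ)))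
      (𝓝[Set.Ioo (1:ℝ) 2] 1) (𝓝 0) := by
    have hcomp : Tendsto (fun s : ℝ => Complex.exp (((s / (1 - s^2) * Δ : ℝ) : ℂ)))
        (𝓝[Set.Ioo (1:ℝ) 2] 1) (𝓝 0) :=
      cexp_real_tendsto_atBot_zero.comp hr₂
    apply hcomp.congr'
    filter_upwards [self_mem_nhdsWithin] with s hs
    rcases hs with ⟨hs1, hs2⟩
    have hsne : (1:ℝ) - s^2 ≠ 0 := by nlinarith
    rw [cc_real_mul_I hsne]
    push_cast
    ring_nf
  have hζ₁ : Tendsto (fun s : ℝ => (s:ℂ) * Complex.I) (𝓝[Set.Ioo (0:ℝ) 1] 1) (𝓝 Complex.I) :=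
    hζ.mono_left nhdsWithin_le_nhds
  have hζ₂ : Tendsto (fun s : ℝ => (s:ℂ) * Complex.I) (𝓝[Set.Ioo (1:ℝ) 2] 1) (𝓝 Complex.I) :=
    hζ.mono_left nhdsWithin_le_nhds
  have hA₁ : Tendsto (fun s : ℝ => Φ t₁ ((s:ℂ) * Complex.I) * (1 + lam * Φ t₀ ((s:ℂ) * Complex.I)))
      (𝓝[Set.Ioo (0:ℝ) 1] 1) (𝓝 (b * (1 + lam * a))) :=
    ((hΦt₁c.tendsto _).comp hζ₁).mul ((((hΦt₀c.tendsto _).comp hζ₁).const_mul _).const_add 1)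
  have hA₂ : Tendsto (fun s : ℝ => Φ t₁ ((s:ℂ) * Complex.I) * (1 + lam * Φ t₀ ((s:ℂ) * Complex.I)))
      (𝓝[Set.Ioo (1:ℝ) 2] 1) (𝓝 (b * (1 + lam * a))) :=
    ((hΦt₁c.tendsto _).comp hζ₂).mul ((((hΦt₀c.tendsto _).comp hζ₂).const_mul _).const_add 1)
  have hB₁ : Tendsto (fun s : ℝ => G₂ ((s:ℂ) * Complex.I))
      (𝓝[Set.Ioo (0:ℝ) 1] 1) (𝓝 (a * (1 + lam * b))) :=
    ((hΦt₀c.tendsto _).comp hζ₁).mul ((((hΦt₁c.tendsto _).comp hζ₁).const_mul _).const_add 1)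
  have hB₂ : Tendsto (fun s : ℝ => G₂ ((s:ℂ) * Complex.I))
      (𝓝[Set.Ioo (1:ℝ) 2] 1) (𝓝 (a * (1 + lam * b))) :=
    ((hΦt₀c.tendsto _).comp hζ₂).mul ((((hΦt₁c.tendsto _).comp hζ₂).const_mul _).const_add 1)
  -- first limit : a * (1 + lam * b) = 0
  have hab : a * (1 + lam * b) = 0 := by
    have hG₁lim : Tendsto (fun s : ℝ => G₁ ((s:ℂ) * Complex.I)) (𝓝[Set.Ioo (0:ℝ) 1] 1) (𝓝 0) := by
      have hm := hexp₁.mul hA₁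
      rw [zero_mul] at hm
      exact hm
    have heqf : (fun s : ℝ => G₂ ((s:ℂ) * Complex.I))
        =ᶠ[𝓝[Set.Ioo (0:ℝ) 1] 1] (fun s : ℝ => G₁ ((s:ℂ) * Complex.I)) := by
      filter_upwards [self_mem_nhdsWithin] with s hs
      exact (hEq (hmemU' s (by rcases hs with ⟨h1,h2⟩; linarith) (by rcases hs with ⟨h1,h2⟩; linarith))).symm
    exact tendsto_nhds_unique (hB₁.congr' heqf) hG₁lim
  -- second limit : b * (1 + lam * a) = 0
  have hba : b * (1 + lam * a) = 0 := by
    have heqf : (fun s : ℝ => Φ t₁ ((s:ℂ) * Complex.I) * (1 + lam * Φ t₀ ((s:ℂ) * Complex.I)))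
        =ᶠ[𝓝[Set.Ioo (1:ℝ) 2] 1]
        (fun s : ℝ => Complex.exp (cc ((s:ℂ) * Complex.I) * ((Δ:ℝ):ℂ)) * G₂ ((s:ℂ) * Complex.I)) := by
      filter_upwards [self_mem_nhdsWithin] with s hs
      have h1 := hEq (hmemU' s (by rcases hs with ⟨h1,h2⟩; linarith) (by rcases hs with ⟨h1,h2⟩; linarith))
      rw [hG₁] at h1
      simp only at h1
      rw [← h1, ← mul_assoc, ← Complex.exp_add]
      simp
    have hRHS : Tendsto (fun s : ℝ => Complex.exp (cc ((s:ℂ) * Complex.I) * ((Δ:ℝ):ℂ))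
        * G₂ ((s:ℂ) * Complex.I)) (𝓝[Set.Ioo (1:ℝ) 2] 1) (𝓝 0) := by
      have hm := hexp₂.mul hB₂
      rw [zero_mul] at hm
      exact hm
    exact tendsto_nhds_unique (hA₂.congr' heqf) hRHS
  have hb0 : b = 0 := by
    rcases mul_eq_zero.1 hba with h | h
    · exact h
    · exact absurd h h1a
  apply ha0
  have hfin : a * (1 + (lam:ℂ) * b) = 0 := hab
  rw [hb0] at hfin
  simpa using hfin

private lemma norm_cexp_le {z z₀ : ℂ} {x L : ℝ} (hz : ‖z - z₀‖ < 1) (hx : |x| ≤ L) :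
    ‖Complex.exp (-Complex.I * z * x)‖ ≤ Real.exp ((‖z₀‖ + 1) * L) := by
  rw [Complex.norm_exp]
  apply Real.exp_le_exp.2
  have hre : (-Complex.I * z * (x:ℂ)).re = z.im * x := by
    simp [Complex.mul_re, Complex.mul_im]
  rw [hre]
  have h2 : |z.im - z₀.im| ≤ ‖z - z₀‖ := by
    simpa using Complex.abs_im_le_norm (z - z₀)
  have h3 : |z₀.im| ≤ ‖z₀‖ := Complex.abs_im_le_norm z₀
  have h1 : |z.im| ≤ ‖z₀‖ + 1 := by
    have := abs_sub_abs_le_abs_sub z.im z₀.im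
    linarith
  have hL0 : (0:ℝ) ≤ L := le_trans (abs_nonneg x) hx
  calc z.im * x ≤ |z.im * x| := le_abs_self _
    _ = |z.im| * |x| := abs_mul _ _
    _ ≤ (‖z₀‖ + 1) * L := mul_le_mul h1 hx (abs_nonneg x) (by positivity)

private lemma entire_aux {v : ℝ → ℝ} {L : ℝ} (hL : 0 < L)
    (hv : Integrable v) (hs : ∀ x : ℝ, L < |x| → v x = 0) :
    Differentiable ℂ (fun z : ℂ => ∫ x : ℝ, (v x : ℂ) * Complex.exp (-Complex.I * z * x)) := by
  intro z₀
  set C : ℝ := L * Real.exp ((‖z₀‖ + 1) * L) with hC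
  have hC0 : 0 ≤ C := by positivity
  have hmv : AEStronglyMeasurable (fun x : ℝ => (v x : ℂ)) volume :=
    Complex.continuous_ofReal.comp_aestronglyMeasurable hv.aestronglyMeasurable
  have hmeas : ∀ z : ℂ, AEStronglyMeasurable
      (fun x : ℝ => (v x : ℂ) * Complex.exp (-Complex.I * z * x)) volume := by
    intro z
    exact hmv.mul ((Complex.continuous_exp.comp (by continuity)).aestronglyMeasurable)
  have key := hasDerivAt_integral_of_dominated_loc_of_deriv_le (μ := volume)
      (F := fun (z : ℂ) (x : ℝ) => (v x : ℂ) * Complex.exp (-Complex.I * z * x))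
      (F' := fun (z : ℂ) (x : ℝ) => (v x : ℂ) * (Complex.exp (-Complex.I * z * x) * (-Complex.I * x)))
      (x₀ := z₀) (bound := fun x => ‖v x‖ * C) (s := Metric.ball z₀ 1) (Metric.ball_mem_nhds z₀ one_pos)
      (Filter.Eventually.of_forall fun z => hmeas z)
      ?hint ?hmeas' ?hbound ?hbint ?hdiff
  · exact key.2.differentiableAt
  case hint =>
    refine (hv.norm.mul_const (Real.exp ((‖z₀‖ + 1) * L))).mono (hmeas z₀)
      (Filter.Eventually.of_forall fun x => ?_)
    by_cases hx : |x| ≤ L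
    · rw [norm_mul]
      have h1 : ‖z₀ - z₀‖ < 1 := by simp
      have := norm_cexp_le h1 hx
      have h4 : ‖(v x : ℂ)‖ = ‖v x‖ := Complex.norm_real _
      have h6 : ‖‖v x‖ * Real.exp ((‖z₀‖ + 1) * L)‖ = ‖v x‖ * Real.exp ((‖z₀‖ + 1) * L) := by
        simp [Real.norm_eq_abs, abs_mul, abs_abs, _root_.abs_of_nonneg (Real.exp_pos _).le]
      rw [h4, h6]
      exact mul_le_mul_of_nonneg_left this (norm_nonneg _)
    · simp [hs x (not_le.1 hx)]
  case hmeas' =>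
    exact hmv.mul ((Complex.continuous_exp.comp (by continuity)).aestronglyMeasurable.mul
      (Continuous.aestronglyMeasurable (by continuity)))
  case hbound =>
    refine Filter.Eventually.of_forall fun x => fun z hz => ?_
    by_cases hx : |x| ≤ L
    · rw [norm_mul, norm_mul]
      have h1 := norm_cexp_le (by simpa [Metric.mem_ball, dist_eq_norm] using hz) hx
      have h2 : ‖-Complex.I * (x:ℂ)‖ = |x| := by
        rw [neg_mul, norm_neg, norm_mul, Complex.norm_I, one_mul, Complex.norm_real,
          Real.norm_eq_abs]
      have h4 : ‖(v x : ℂ)‖ = ‖v x‖ := Complex.norm_real _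
      rw [h2, h4, hC]
      have : ‖Complex.exp (-Complex.I * z * x)‖ * |x| ≤ Real.exp ((‖z₀‖ + 1) * L) * L := by
        exact mul_le_mul h1 hx (abs_nonneg x) (Real.exp_pos _).le
      calc ‖v x‖ * (‖Complex.exp (-Complex.I * z * x)‖ * |x|)
          ≤ ‖v x‖ * (Real.exp ((‖z₀‖ + 1) * L) * L) :=
            mul_le_mul_of_nonneg_left this (norm_nonneg _)
        _ = ‖v x‖ * (L * Real.exp ((‖z₀‖ + 1) * L)) := by ring
    · simp [hs x (not_le.1 hx)]
  case hbint => exact hv.norm.mul_const C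
  case hdiff =>
    refine Filter.Eventually.of_forall fun x => fun z _ => ?_
    have h1 : HasDerivAt (fun z : ℂ => -Complex.I * z * x) (-Complex.I * x) z := by
      simpa using ((hasDerivAt_id z).const_mul (-Complex.I)).mul_const (x : ℂ)
    exact (h1.cexp).const_mul ((v x : ℂ))


/-- Let `u` be `C¹` in time, compactly supported in `x` uniformly in `t`, integrable
against `e^{|x|}dx`, and suppose its Fourier transform in `x` satisfies
`(1+ξ²) û_t(ξ,t) = -iξ (û(ξ,t) + λ û(ξ,t)²)` for all real `ξ` and `t ∈ (0,T)`, with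
`λ ≠ 0`. Then for each `t ∈ (0,T)`, either `û(i,t) = 0` or `û(i,t) = -1/λ`, where
`û(i,t) = ∫_ℝ u(x,t) eˣ dx`. -/
theorem nonlocal_bbm_alternative_at_i (T lam L : ℝ) (hT : 0 < T) (hlam : lam ≠ 0)
    (hL : 0 < L)
    (u : ℝ → ℝ → ℝ)
    (hreg : ∀ x, ContDiff ℝ 1 (fun t => u x t))
    (hint : ∀ t ∈ Set.Ioo 0 T, Integrable (fun x : ℝ => u x t * Real.exp |x|))
    (hsupp : ∀ x t, t ∈ Set.Ioo 0 T → L < |x| → u x t = 0)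
    (hode : ∀ (ξ : ℝ), ∀ t ∈ Set.Ioo 0 T,
      (1 + (ξ : ℂ) ^ 2) *
          deriv (fun s => ∫ x : ℝ, (u x s : ℂ) * Complex.exp (-Complex.I * ξ * x)) t
        = -Complex.I * ξ *
            ((∫ x : ℝ, (u x t : ℂ) * Complex.exp (-Complex.I * ξ * x))
              + lam * (∫ x : ℝ, (u x t : ℂ) * Complex.exp (-Complex.I * ξ * x)) ^ 2)) :
    ∀ t ∈ Set.Ioo 0 T,
      (∫ x : ℝ, (u x t : ℂ) * (Real.exp x : ℂ)) = 0 ∨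
      (∫ x : ℝ, (u x t : ℂ) * (Real.exp x : ℂ)) = -1 / (lam : ℂ) := by
  have hint1 : ∀ t ∈ Set.Ioo 0 T, Integrable (fun x : ℝ => u x t) := by
    intro t ht
    have h := hint t ht
    have hm : AEStronglyMeasurable (fun x : ℝ => u x t) volume := by
      have heq : (fun x : ℝ => u x t)
          = fun x => (u x t * Real.exp |x|) * Real.exp (-|x|) := by
        funext x
        rw [mul_assoc, ← Real.exp_add]
        simp
      rw [heq]
      exact h.aestronglyMeasurable.mul
        ((Real.continuous_exp.comp _root_.continuous_abs.neg).aestronglyMeasurable)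
    refine h.mono hm (Filter.Eventually.of_forall fun x => ?_)
    have h1 : (1:ℝ) ≤ Real.exp |x| := Real.one_le_exp (abs_nonneg x)
    rw [Real.norm_eq_abs, Real.norm_eq_abs, abs_mul,
      _root_.abs_of_nonneg (Real.exp_pos |x|).le]
    nlinarith [abs_nonneg (u x t)]
  have hmain := key T lam hT hlam
      (fun t z => ∫ x : ℝ, (u x t : ℂ) * Complex.exp (-Complex.I * z * x))
      (fun t ht => entire_aux hL (hint1 t ht) (fun x hx => hsupp x t ht hx))
      (fun ξ t ht => hode ξ t ht)
  intro t ht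
  have hconv : (∫ x : ℝ, (u x t : ℂ) * Complex.exp (-Complex.I * Complex.I * x))
      = ∫ x : ℝ, (u x t : ℂ) * (Real.exp x : ℂ) := by
    congr 1
    funext x
    congr 1
    rw [Complex.ofReal_exp]
    congr 1
    rw [neg_mul, Complex.I_mul_I, neg_neg, one_mul]
  rcases hmain t ht with h | h
  · left; rw [← hconv]; exact h
  · right; rw [← hconv]; exact h
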